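/- Tightness of the edge costs at optimality in the MICP formulation: if a feasible point of the MICP formulation has l_e > ‖l^{xy}_e‖ for some edge e, then the point obtained from it by replacing l_e with ‖l^{xy}_e‖ (all other variables unchanged) is again feasible for the MICP formulation and has strictly smaller objective value. Consequently, every optimal solution of the MICP formulation satisfies l_e = ‖l^{xy}_e‖ = ‖z′_{e,p} − z_{e,p}‖ for every edge e ∈ E. -/
import Mathlib


open scoped BigOperators Classical

noncomputable section

/-- The Euclidean plane ℝ². -/
abbrev Plane := EuclideanSpace ℝ (Fin 2)

/-- Nodes of the graph: `Sum.inl i` is the segment node `i ∈ V_seg`,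
`Sum.inr false` is the depot `s`, and `Sum.inr true` is the depot copy `s'`. -/
abbrev Node (ι : Type*) := ι ⊕ Bool

/-- The data of an MA-MT-TSP instance: a finite type `ι` of segment nodes, a finite
type `υ` of targets, a cluster assignment `cl` whose surjectivity expresses that every
cluster is nonempty, time windows `tlo i ≤ thi i`, start positions `pos`, velocities
`vel` (vanishing at the depot and its copy), a maximum speed `vmax > 0`, and a number
of agents `m ≥ 1`. -/
structure MTData (ι υ : Type*) where
  cl : ι → υ
  cl_surj : Function.Surjective cl
  tlo : Node ι → ℝ
  thi : Node ι → ℝ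
  tw : ∀ i, tlo i ≤ thi i
  pos : Node ι → Plane
  vel : Node ι → Plane
  vel_s : vel (Sum.inr false) = 0
  vel_s' : vel (Sum.inr true) = 0
  vmax : ℝ
  vmax_pos : 0 < vmax
  m : ℕ
  m_pos : 1 ≤ m

variable {ι υ : Type*} [Fintype ι] [Fintype υ]

/-- The edge relation: from the depot `s` to every segment node, between segment nodes
in different clusters, and from every segment node to the depot copy `s'`. -/
def isEdge (D : MTData ι υ) : Node ι → Node ι → Prop
  | Sum.inr false, Sum.inl _ => True
  | Sum.inl i, Sum.inl j => D.cl i ≠ D.cl j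
  | Sum.inl _, Sum.inr true => True
  | _, _ => False

/-- The edge set `E` as a finite set of ordered pairs of nodes. -/
def edges (D : MTData ι υ) : Finset (Node ι × Node ι) :=
  Finset.univ.filter fun e => isEdge D e.1 e.2

/-- `E_i^in`: the edges of `E` entering node `i`. -/
def inE (D : MTData ι υ) (i : Node ι) : Finset (Node ι × Node ι) :=
  (edges D).filter fun e => e.2 = i

/-- `E_i^out`: the edges of `E` exiting node `i`. -/
def outE (D : MTData ι υ) (i : Node ι) : Finset (Node ι × Node ι) :=
  (edges D).filter fun e => e.1 = i

/-- A point of the nonconvex formulation: edge variables `y`, `l`, `lxy`, `zp`, `zt`,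
`zp'`, `zt'` for each edge and agent, and node variables `t`, `p` for each node and
agent.  Agents are indexed by `Fin m`. -/
structure NCPoint (ι : Type*) (m : ℕ) where
  y : Node ι × Node ι → Fin m → ℝ
  l : Node ι × Node ι → Fin m → ℝ
  lxy : Node ι × Node ι → Fin m → Plane
  zp : Node ι × Node ι → Fin m → Plane
  zt : Node ι × Node ι → Fin m → ℝ
  zp' : Node ι × Node ι → Fin m → Plane
  zt' : Node ι × Node ι → Fin m → ℝ
  t : Node ι → Fin m → ℝ
  p : Node ι → Fin m → Plane

variable {ι υ : Type*} [Fintype ι] [Fintype υ]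

/-- Feasibility for the nonconvex formulation. -/
def NCFeas (D : MTData ι υ) (P : NCPoint ι D.m) : Prop :=
  (∀ e ∈ edges D, ∀ k, P.y e k = 0 ∨ P.y e k = 1) ∧
  (∀ e ∈ edges D, ∀ k, 0 ≤ P.l e k) ∧
  (∀ k, ∑ e ∈ outE D (Sum.inr false), P.y e k ≤ 1) ∧
  (∀ k, ∑ e ∈ inE D (Sum.inr true), P.y e k ≤ 1) ∧
  (∀ u : υ, ∑ k, ∑ i ∈ Finset.univ.filter (fun i => D.cl i = u),
      ∑ e ∈ inE D (Sum.inl i), P.y e k = 1) ∧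
  (∀ i : ι, ∀ k, ∑ e ∈ inE D (Sum.inl i), P.y e k = ∑ e ∈ outE D (Sum.inl i), P.y e k) ∧
  (∀ i : Node ι, ∀ k, D.tlo i ≤ P.t i k ∧ P.t i k ≤ D.thi i) ∧
  (∀ i : Node ι, ∀ k, P.p i k = D.pos i + (P.t i k - D.tlo i) • D.vel i) ∧
  (∀ e ∈ edges D, ∀ k,
    P.zp e k = P.y e k • P.p e.1 k ∧
    P.zt e k = P.y e k * P.t e.1 k ∧
    P.zp' e k = P.y e k • P.p e.2 k ∧
    P.zt' e k = P.y e k * P.t e.2 k ∧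
    P.l e k ≤ D.vmax * (P.zt' e k - P.zt e k) ∧
    P.lxy e k = P.zp' e k - P.zp e k ∧
    ‖P.lxy e k‖ ^ 2 ≤ P.l e k ^ 2)

/-- Objective of the nonconvex formulation. -/
def NCObj (D : MTData ι υ) (P : NCPoint ι D.m) : ℝ :=
  ∑ k, ∑ e ∈ edges D, P.l e k

/-- A point of the MICP formulation: a single set of edge variables, together with the
integer depot flow `α` (stated as a real number required to be integral). -/
structure MICPPoint (ι : Type*) where
  y : Node ι × Node ι → ℝ
  l : Node ι × Node ι → ℝ
  lxy : Node ι × Node ι → Plane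
  zp : Node ι × Node ι → Plane
  zt : Node ι × Node ι → ℝ
  zp' : Node ι × Node ι → Plane
  zt' : Node ι × Node ι → ℝ
  α : ℝ

/-- Feasibility for the MICP formulation. -/
def MICPFeas (D : MTData ι υ) (Q : MICPPoint ι) : Prop :=
  (∀ e ∈ edges D, Q.y e = 0 ∨ Q.y e = 1) ∧
  (∀ e ∈ edges D, 0 ≤ Q.l e) ∧
  (∃ n : ℤ, Q.α = n) ∧ (1 ≤ Q.α) ∧ (Q.α ≤ (D.m : ℝ)) ∧
  (∑ e ∈ outE D (Sum.inr false), Q.y e = Q.α) ∧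
  (∑ e ∈ inE D (Sum.inr true), Q.y e = Q.α) ∧
  (∀ u : υ, ∑ i ∈ Finset.univ.filter (fun i => D.cl i = u),
      ∑ e ∈ inE D (Sum.inl i), Q.y e = 1) ∧
  (∀ i : ι, ∑ e ∈ inE D (Sum.inl i), Q.y e = ∑ e ∈ outE D (Sum.inl i), Q.y e) ∧
  (∀ i : ι, ∑ e ∈ inE D (Sum.inl i), Q.zt' e = ∑ e ∈ outE D (Sum.inl i), Q.zt e) ∧
  (∀ e ∈ edges D,
    Q.y e * D.tlo e.1 ≤ Q.zt e ∧ Q.zt e ≤ Q.y e * D.thi e.1 ∧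
    Q.y e * D.tlo e.2 ≤ Q.zt' e ∧ Q.zt' e ≤ Q.y e * D.thi e.2 ∧
    Q.zp e = Q.zt e • D.vel e.1 + Q.y e • (D.pos e.1 - D.tlo e.1 • D.vel e.1) ∧
    Q.zp' e = Q.zt' e • D.vel e.2 + Q.y e • (D.pos e.2 - D.tlo e.2 • D.vel e.2) ∧
    Q.l e ≤ D.vmax * (Q.zt' e - Q.zt e) ∧
    Q.lxy e = Q.zp' e - Q.zp e ∧
    ‖Q.lxy e‖ ^ 2 ≤ Q.l e ^ 2)

/-- Objective of the MICP formulation. -/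
def MICPObj (D : MTData ι υ) (Q : MICPPoint ι) : ℝ :=
  ∑ e ∈ edges D, Q.l e

/-- **tightness of the edge costs at optimality, MICP formulation.**
If a feasible point of the MICP has `l_e > ‖lxy_e‖` for some edge `e`, then replacing
`l_e` by `‖lxy_e‖` (all other variables unchanged) yields a feasible point with
strictly smaller objective value.  Consequently every optimal solution of the MICP
satisfies `l_e = ‖lxy_e‖ = ‖z'_{e,p} − z_{e,p}‖` for every edge `e`. -/
theorem micp_edge_costs_tight_at_optimality
    {ι υ : Type*} [Fintype ι] [Fintype υ] [DecidableEq ι] (D : MTData ι υ) :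
    (∀ (Q : MICPPoint ι) (e : Node ι × Node ι), MICPFeas D Q → e ∈ edges D →
      ‖Q.lxy e‖ < Q.l e →
      MICPFeas D { Q with l := Function.update Q.l e ‖Q.lxy e‖ } ∧
      MICPObj D { Q with l := Function.update Q.l e ‖Q.lxy e‖ } < MICPObj D Q) ∧
    (∀ Q : MICPPoint ι, MICPFeas D Q →
      (∀ Q' : MICPPoint ι, MICPFeas D Q' → MICPObj D Q ≤ MICPObj D Q') →
      ∀ e ∈ edges D, Q.l e = ‖Q.lxy e‖ ∧ ‖Q.lxy e‖ = ‖Q.zp' e - Q.zp e‖) := by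
  have main : ∀ (Q : MICPPoint ι) (e : Node ι × Node ι), MICPFeas D Q → e ∈ edges D →
      ‖Q.lxy e‖ < Q.l e →
      MICPFeas D { Q with l := Function.update Q.l e ‖Q.lxy e‖ } ∧
      MICPObj D { Q with l := Function.update Q.l e ‖Q.lxy e‖ } < MICPObj D Q := by
    intro Q e hQ he hlt
    obtain ⟨h1, h2, h3, h4, h5, h6, h7, h8, h9, h10, h11⟩ := hQ
    constructor
    · refine ⟨h1, ?_, h3, h4, h5, h6, h7, h8, h9, h10, ?_⟩
      · intro f hf
        rcases eq_or_ne f e with h | h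
        · subst h; simp [Function.update_self]
        · simpa [Function.update_of_ne h] using h2 f hf
      · intro f hf
        obtain ⟨a1, a2, a3, a4, a5, a6, a7, a8, a9⟩ := h11 f hf
        rcases eq_or_ne f e with h | h
        · subst h
          exact ⟨a1, a2, a3, a4, a5, a6,
            by simpa [Function.update_self] using le_trans hlt.le a7, a8,
            by simp [Function.update_self]⟩
        · exact ⟨a1, a2, a3, a4, a5, a6,
            by simpa [Function.update_of_ne h] using a7, a8,
            by simpa [Function.update_of_ne h] using a9⟩
    · unfold MICPObj
      apply Finset.sum_lt_sum
      · intro f hf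
        rcases eq_or_ne f e with h | h
        · subst h; simpa [Function.update_self] using hlt.le
        · simp [Function.update_of_ne h]
      · exact ⟨e, he, by simpa [Function.update_self] using hlt⟩
  refine ⟨main, ?_⟩
  intro Q hQ hopt e he
  obtain ⟨h1, h2, h3, h4, h5, h6, h7, h8, h9, h10, h11⟩ := hQ
  obtain ⟨a1, a2, a3, a4, a5, a6, a7, a8, a9⟩ := h11 e he
  have hle : ‖Q.lxy e‖ ≤ Q.l e := by
    nlinarith [norm_nonneg (Q.lxy e), h2 e he]
  have hnot : ¬ ‖Q.lxy e‖ < Q.l e := by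
    intro hlt
    obtain ⟨hfeas, hobj⟩ := main Q e ⟨h1, h2, h3, h4, h5, h6, h7, h8, h9, h10, h11⟩ he hlt
    exact absurd (hopt _ hfeas) (not_le.mpr hobj)
  exact ⟨le_antisymm (not_lt.mp hnot) hle, by rw [a8]⟩

end
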